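/- Let G and G₁,…,Gₘ be finite groups with counting measure and φⱼ : G → Gⱼ homomorphisms, s ∈ [0,1]^m. Then the supremum BL(φ,s) of the Brascamp–Lieb functional BL(φ,s;f) over all nonnegative nonzero tuples f is attained at a tuple of the form fⱼ = aⱼ χ_{Γⱼ}, where each Γⱼ is a subgroup of Gⱼ and aⱼ > 0. -/

import Mathlib

open Finset

/-- Convolution on a finite group with counting measure:
`(f ∗ g)(x) = Σ_y f(y) g(xy⁻¹)`. -/
noncomputable def conv {G : Type*} [Group G] [Fintype G] (f g : G → ℝ) : G → ℝ :=
  fun x => ∑ y, f y * g (x * y⁻¹)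

/-- The Brascamp–Lieb functional on finite groups:
`BL(φ,s;f) = (Σ_{x∈G} ∏ⱼ fⱼ(φⱼ(x))^{sⱼ}) / ∏ⱼ (Σ_{Gⱼ} fⱼ)^{sⱼ}`. -/
noncomputable def BLfun {m : ℕ} {G : Type*} {K : Fin m → Type*} [Group G] [Fintype G]
    [∀ j, Group (K j)] [∀ j, Fintype (K j)]
    (φ : ∀ j, G →* K j) (s : Fin m → ℝ) (f : ∀ j, K j → ℝ) : ℝ :=
  (∑ x, ∏ j, f j (φ j x) ^ s j) / ∏ j, (∑ y, f j y) ^ s j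

/-- The Brascamp–Lieb constant on finite groups: the supremum of the Brascamp–Lieb
functional over nonnegative, not identically zero inputs. -/
noncomputable def BLconst {m : ℕ} {G : Type*} {K : Fin m → Type*} [Group G] [Fintype G]
    [∀ j, Group (K j)] [∀ j, Fintype (K j)]
    (φ : ∀ j, G →* K j) (s : Fin m → ℝ) : ℝ :=
  sSup {c : ℝ | ∃ f : ∀ j, K j → ℝ,
    (∀ j x, 0 ≤ f j x) ∧ (∀ j, f j ≠ 0) ∧ c = BLfun φ s f}

set_option linter.unusedSectionVars false
set_option linter.unusedVariables false

namespace BLaux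
open Filter

variable {H : Type*} [Group H] [Fintype H]

variable {H : Type*} [Group H] [Fintype H]

theorem conv_nonneg {f g : H → ℝ} (hf : ∀ x, 0 ≤ f x) (hg : ∀ x, 0 ≤ g x) (x : H) :
    0 ≤ conv f g x :=
  Finset.sum_nonneg fun y _ => mul_nonneg (hf y) (hg _)

theorem sum_conv (f g : H → ℝ) : ∑ x, conv f g x = (∑ x, f x) * (∑ x, g x) := by
  unfold conv
  rw [Finset.sum_comm, Finset.sum_mul]
  refine Finset.sum_congr rfl fun y _ => ?_
  rw [← Finset.mul_sum]
  congr 1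
  exact Equiv.sum_comp (Equiv.mulRight y⁻¹) g

theorem conv_pos_iff {f g : H → ℝ} (hf : ∀ x, 0 ≤ f x) (hg : ∀ x, 0 ≤ g x) (x : H) :
    0 < conv f g x ↔ ∃ y, 0 < f y ∧ 0 < g (x * y⁻¹) := by
  constructor
  · intro h
    by_contra hc
    push_neg at hc
    have h0 : conv f g x = 0 := Finset.sum_eq_zero fun y _ => by
      rcases lt_or_eq_of_le (hf y) with h1 | h1
      · have h2 := hc y h1
        have h3 := hg (x * y⁻¹)
        have : g (x * y⁻¹) = 0 := le_antisymm h2 h3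
        rw [this, mul_zero]
      · rw [← h1, zero_mul]
    rw [h0] at h
    exact lt_irrefl _ h
  · rintro ⟨y, hy, hgy⟩
    exact Finset.sum_pos' (fun z _ => mul_nonneg (hf z) (hg _))
      ⟨y, Finset.mem_univ y, mul_pos hy hgy⟩

theorem conv_assoc (f g h : H → ℝ) : conv (conv f g) h = conv f (conv g h) := by
  funext x
  unfold conv
  simp only [Finset.sum_mul, Finset.mul_sum]
  rw [Finset.sum_comm]
  refine Finset.sum_congr rfl fun z _ => Fintype.sum_equiv (Equiv.mulRight z⁻¹) _ _ fun w => ?_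
  simp only [Equiv.coe_mulRight]
  rw [mul_inv_rev, inv_inv]
  
  group




/-- iterated convolution: `itc g n = g^{*(n+1)}` -/
noncomputable def itc (g : H → ℝ) : ℕ → (H → ℝ)
  | 0 => g
  | n + 1 => conv (itc g n) g

theorem itc_nonneg {g : H → ℝ} (hg : ∀ x, 0 ≤ g x) : ∀ n x, 0 ≤ itc g n x := by
  intro n
  induction n with
  | zero => exact hg
  | succ n ih => exact fun x => conv_nonneg ih hg x

theorem itc_sum {g : H → ℝ} (hg : ∑ x, g x = 1) : ∀ n, ∑ x, itc g n x = 1 := by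
  intro n
  induction n with
  | zero => exact hg
  | succ n ih => rw [itc, sum_conv, ih, hg, mul_one]

theorem itc_add (g : H → ℝ) (a b : ℕ) : itc g (a + b + 1) = conv (itc g a) (itc g b) := by
  induction b with
  | zero => rfl
  | succ b ih =>
    show itc g ((a + b + 1) + 1) = _
    rw [itc, ih, conv_assoc]
    rfl

theorem supp_conv_congr {a a' b : H → ℝ} (ha : ∀ x, 0 ≤ a x) (ha' : ∀ x, 0 ≤ a' x)
    (hb : ∀ x, 0 ≤ b x) (h : ∀ x, 0 < a x ↔ 0 < a' x) (x : H) :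
    0 < conv a b x ↔ 0 < conv a' b x := by
  rw [conv_pos_iff ha hb, conv_pos_iff ha' hb]
  exact exists_congr fun y => and_congr_left fun _ => h y

theorem exists_subgroup_of_mul_closed (S : Set H) (hne : S.Nonempty)
    (hmul : ∀ a ∈ S, ∀ b ∈ S, a * b ∈ S) : ∃ Γ : Subgroup H, (Γ : Set H) = S := by
  have hpow : ∀ a ∈ S, ∀ k : ℕ, a ^ (k + 1) ∈ S := by
    intro a ha k
    induction k with
    | zero => simpa using ha
    | succ k ih => rw [pow_succ]; exact hmul _ ih _ ha
  have hone : (1 : H) ∈ S := by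
    obtain ⟨a, ha⟩ := hne
    have h1 := hpow a ha (orderOf a - 1)
    rwa [Nat.sub_add_cancel (orderOf_pos a), pow_orderOf_eq_one] at h1
  have hinv : ∀ a ∈ S, a⁻¹ ∈ S := by
    intro a ha
    rcases eq_or_lt_of_le (Nat.succ_le_of_lt (orderOf_pos a)) with h1 | h1
    · have : a = 1 := orderOf_eq_one_iff.mp h1.symm
      rwa [this, inv_one]
    · have h2 := hpow a ha (orderOf a - 2)
      have h3 : orderOf a - 2 + 1 = orderOf a - 1 := by omega
      have h4 : a⁻¹ = a ^ (orderOf a - 1) := by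
        refine inv_eq_of_mul_eq_one_right ?_
        rw [← pow_succ']
        have : orderOf a - 1 + 1 = orderOf a := by omega
        rw [this, pow_orderOf_eq_one]
      rw [h4, ← h3]
      exact h2
  exact ⟨⟨⟨⟨S, fun {a b} ha hb => hmul a ha b hb⟩, hone⟩, fun {a} ha => hinv a ha⟩, rfl⟩

theorem conv_supp_subset {p q : H → ℝ} (Γ : Subgroup H) (hp : ∀ x ∉ Γ, p x = 0)
    (hq : ∀ x ∉ Γ, q x = 0) : ∀ x ∉ Γ, conv p q x = 0 := by
  intro x hx
  refine Finset.sum_eq_zero fun y _ => ?_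
  by_cases hy : y ∈ Γ
  · have : x * y⁻¹ ∉ Γ := fun hc => hx (by simpa using Γ.mul_mem hc hy)
    rw [hq _ this, mul_zero]
  · rw [hp _ hy, zero_mul]

/-- Convolution with uniform measure on a subgroup absorbs. -/
theorem conv_unif_left (Γ : Subgroup H) (a : ℝ) {p : H → ℝ}
    (hsum : ∑ y, p y = 1) (hp : ∀ x ∉ Γ, p x = 0) :
    conv (Set.indicator (Γ : Set H) fun _ => a) p
      = Set.indicator (Γ : Set H) fun _ => a := by
  funext x
  by_cases hx : x ∈ Γ
  · have h1 : conv (Set.indicator (Γ : Set H) fun _ => a) p x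
        = ∑ z, Set.indicator (Γ : Set H) (fun _ => a) (z⁻¹ * x) * p (x * (z⁻¹ * x)⁻¹) :=
      (Equiv.sum_comp ((Equiv.inv H).trans (Equiv.mulRight x))
        fun y => Set.indicator (Γ : Set H) (fun _ => a) y * p (x * y⁻¹)).symm
    rw [h1]
    have h2 : ∀ z : H, Set.indicator (Γ : Set H) (fun _ => a) (z⁻¹ * x) * p (x * (z⁻¹ * x)⁻¹)
        = a * p z := by
      intro z
      have hz : x * (z⁻¹ * x)⁻¹ = z := by group
      rw [hz]
      by_cases hzΓ : z ∈ Γ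
      · have : z⁻¹ * x ∈ Γ := Γ.mul_mem (Γ.inv_mem hzΓ) hx
        rw [Set.indicator_of_mem this]
      · have : z⁻¹ * x ∉ Γ := by
          intro hc
          exact hzΓ (by simpa using Γ.mul_mem hx (Γ.inv_mem hc))
        rw [Set.indicator_of_notMem this, hp z hzΓ]
        simp
    rw [Finset.sum_congr rfl fun z _ => h2 z, ← Finset.mul_sum, hsum, mul_one,
      Set.indicator_of_mem hx]
  · rw [Set.indicator_of_notMem hx]
    refine Finset.sum_eq_zero fun y _ => ?_
    by_cases hy : y ∈ Γ
    · have : x * y⁻¹ ∉ Γ := fun hc => hx (by simpa using Γ.mul_mem hc hy)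
      rw [hp _ this, mul_zero]
    · rw [Set.indicator_of_notMem hy, zero_mul]

theorem conv_unif_right (Γ : Subgroup H) (a : ℝ) {p : H → ℝ}
    (hsum : ∑ y, p y = 1) (hp : ∀ x ∉ Γ, p x = 0) :
    conv p (Set.indicator (Γ : Set H) fun _ => a)
      = Set.indicator (Γ : Set H) fun _ => a := by
  funext x
  by_cases hx : x ∈ Γ
  · have h2 : ∀ y : H, p y * Set.indicator (Γ : Set H) (fun _ => a) (x * y⁻¹)
        = p y * a := by
      intro y
      by_cases hy : y ∈ Γ
      · rw [Set.indicator_of_mem (Γ.mul_mem hx (Γ.inv_mem hy))]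
      · rw [hp y hy, zero_mul, zero_mul]
    show (∑ y, p y * _) = _
    rw [Finset.sum_congr rfl fun y _ => h2 y, ← Finset.sum_mul, hsum, one_mul,
      Set.indicator_of_mem hx]
  · rw [Set.indicator_of_notMem hx]
    refine Finset.sum_eq_zero fun y _ => ?_
    by_cases hy : y ∈ Γ
    · have : x * y⁻¹ ∉ Γ := fun hc => hx (by simpa using Γ.mul_mem hc hy)
      rw [Set.indicator_of_notMem this, mul_zero]
    · rw [hp y hy, zero_mul]





theorem mixing (Γ : Subgroup H) {g : H → ℝ} (hg : ∀ x, 0 ≤ g x)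
    (hsum : ∑ x, g x = 1) (hS : ∀ x, x ∈ Γ ↔ 0 < g x) :
    ∃ a : ℝ, 0 < a ∧ (∑ y, Set.indicator (Γ : Set H) (fun _ => a) y = 1) ∧
      ∀ x : H, Tendsto (fun k => itc g k x) atTop
        (nhds (Set.indicator (Γ : Set H) (fun _ => a) x)) := by
  classical
  set SM := ∑ y, Set.indicator (Γ : Set H) (fun _ => (1:ℝ)) y with hSMdef
  have hSM1 : (1:ℝ) ≤ SM := by
    have h1 : Set.indicator (Γ : Set H) (fun _ => (1:ℝ)) 1 = 1 :=
      Set.indicator_of_mem Γ.one_mem _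
    calc (1:ℝ) = Set.indicator (Γ : Set H) (fun _ => (1:ℝ)) 1 := h1.symm
      _ ≤ SM := Finset.single_le_sum
          (fun y _ => Set.indicator_nonneg (fun _ _ => zero_le_one) y) (Finset.mem_univ 1)
  have hSM0 : (0:ℝ) < SM := lt_of_lt_of_le one_pos hSM1
  set a := SM⁻¹ with hadef
  have ha : 0 < a := inv_pos.2 hSM0
  set u := Set.indicator (Γ : Set H) (fun _ => a) with hudef
  have hua : ∀ x, u x = a * Set.indicator (Γ : Set H) (fun _ => (1:ℝ)) x := by
    intro x
    by_cases hx : x ∈ Γ <;> simp [hudef, Set.indicator_of_mem, Set.indicator_of_notMem, hx]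
  have hsumu : ∑ y, u y = 1 := by
    rw [Finset.sum_congr rfl fun y _ => hua y, ← Finset.mul_sum, ← hSMdef,
      inv_mul_cancel₀ hSM0.ne']
  have hsuppu : ∀ x ∉ Γ, u x = 0 := fun x hx => Set.indicator_of_notMem hx _
  have hu_nonneg : ∀ x, 0 ≤ u x := Set.indicator_nonneg fun _ _ => ha.le
  have hu_le : ∀ x, u x ≤ 1 := by
    intro x
    by_cases hx : x ∈ Γ
    · rw [hudef, Set.indicator_of_mem hx]
      rw [hadef]
      exact inv_le_one_of_one_le₀ hSM1
    · rw [hudef, Set.indicator_of_notMem hx]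
      exact zero_le_one
  -- minimum of g on Γ
  obtain ⟨y₀, hy₀F, hy₀min⟩ := Finset.exists_min_image (Finset.univ.filter fun y => 0 < g y) g
    ⟨1, Finset.mem_filter.2 ⟨Finset.mem_univ _, (hS 1).1 Γ.one_mem⟩⟩
  set δ := g y₀ with hδdef
  have hδ : 0 < δ := (Finset.mem_filter.1 hy₀F).2
  have hδle : ∀ x ∈ Γ, δ ≤ g x := fun x hx =>
    hy₀min x (Finset.mem_filter.2 ⟨Finset.mem_univ _, (hS x).1 hx⟩)
  set α := δ * SM with hαdef
  have hα0 : 0 < α := mul_pos hδ hSM0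
  have hαle : α ≤ 1 := by
    have h1 : α = ∑ y, δ * Set.indicator (Γ : Set H) (fun _ => (1:ℝ)) y := by
      rw [← Finset.mul_sum, ← hSMdef]
    rw [h1]
    have h2 : ∑ y, δ * Set.indicator (Γ : Set H) (fun _ => (1:ℝ)) y ≤ ∑ y, g y := by
      refine Finset.sum_le_sum fun y _ => ?_
      by_cases hy : y ∈ Γ
      · rw [Set.indicator_of_mem hy, mul_one]
        exact hδle y hy
      · rw [Set.indicator_of_notMem hy, mul_zero]
        exact hg y
    rw [hsum] at h2
    exact h2
  set β := 1 - α/2 with hβdef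
  have hβ0 : 0 ≤ β := by rw [hβdef]; linarith
  have hβ1 : β < 1 := by rw [hβdef]; linarith
  have hβpos : 0 < β := by rw [hβdef]; linarith
  set h := fun x => β⁻¹ * (g x - α/2 * u x) with hhdef
  have hrep : ∀ z, g z = (1 - β) * u z + β * h z := by
    intro z
    rw [hhdef]
    field_simp
    ring
  have haa : α/2 * a = δ/2 := by
    rw [hαdef, hadef]
    field_simp
  have hh0 : ∀ x, 0 ≤ h x := by
    intro x
    refine mul_nonneg (inv_nonneg.2 hβ0) (sub_nonneg.2 ?_)
    by_cases hx : x ∈ Γ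
    · rw [hudef, Set.indicator_of_mem hx, haa]
      have := hδle x hx
      linarith
    · rw [hudef, Set.indicator_of_notMem hx, mul_zero]
      exact hg x
  have hsupph : ∀ x ∉ Γ, h x = 0 := by
    intro x hx
    have hgx : g x = 0 := by
      by_contra hc
      exact hx ((hS x).2 (lt_of_le_of_ne (hg x) (Ne.symm hc)))
    rw [hhdef]
    simp [hgx, hsuppu x hx]
  have hsumh : ∑ x, h x = 1 := by
    rw [hhdef]
    rw [← Finset.mul_sum, Finset.sum_sub_distrib, hsum, ← Finset.mul_sum, hsumu, mul_one]
    rw [hβdef]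
    have h2α : (0:ℝ) < 2 - α := by linarith
    field_simp
  -- main induction
  have main : ∀ k, ∃ hk : H → ℝ, (∀ x, 0 ≤ hk x) ∧ (∑ x, hk x = 1) ∧ (∀ x ∉ Γ, hk x = 0) ∧
      ∀ x, itc g k x = (1 - β^(k+1)) * u x + β^(k+1) * hk x := by
    intro k
    induction k with
    | zero => exact ⟨h, hh0, hsumh, hsupph, fun x => by simpa [itc] using hrep x⟩
    | succ k ih =>
      obtain ⟨hk, hk0, hk1, hksupp, hkrep⟩ := ih
      refine ⟨conv hk h, fun x => conv_nonneg hk0 hh0 x,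
        by rw [sum_conv, hk1, hsumh, mul_one],
        conv_supp_subset Γ hksupp hsupph, fun x => ?_⟩
      show conv (itc g k) g x = _
      have expand : conv (itc g k) g x
          = (1-β^(k+1))*(1-β) * conv u u x + ((1-β^(k+1))*β * conv u h x
            + (β^(k+1)*(1-β) * conv hk u x + β^(k+1)*β * conv hk h x)) := by
        show (∑ y, itc g k y * g (x * y⁻¹)) = _
        unfold conv
        rw [Finset.mul_sum, Finset.mul_sum, Finset.mul_sum, Finset.mul_sum,
          ← Finset.sum_add_distrib, ← Finset.sum_add_distrib, ← Finset.sum_add_distrib]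
        refine Finset.sum_congr rfl fun y _ => ?_
        rw [hkrep y, hrep (x * y⁻¹)]
        ring
      rw [expand, show conv u u = u from conv_unif_left Γ a hsumu hsuppu,
        show conv u h = u from conv_unif_left Γ a hsumh hsupph,
        show conv hk u = u from conv_unif_right Γ a hk1 hksupp]
      ring
  refine ⟨a, ha, hsumu, fun x => ?_⟩
  have hbound : ∀ k, ‖itc g k x - u x‖ ≤ 2 * β^(k+1) := by
    intro k
    obtain ⟨hk, hk0, hk1, _, hkrep⟩ := main k
    have hkle : hk x ≤ 1 := by
      rw [← hk1]
      exact Finset.single_le_sum (fun y _ => hk0 y) (Finset.mem_univ x)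
    have hβp : (0:ℝ) ≤ β^(k+1) := pow_nonneg hβ0 _
    rw [hkrep x]
    have h1 : (1 - β^(k+1)) * u x + β^(k+1) * hk x - u x = β^(k+1) * (hk x - u x) := by ring
    rw [h1, Real.norm_eq_abs, abs_mul, abs_of_nonneg hβp]
    have h2 : |hk x - u x| ≤ 2 := by
      rw [abs_le]
      constructor
      · have := hu_le x
        have := hk0 x
        linarith
      · have := hu_nonneg x
        linarith
    calc β^(k+1) * |hk x - u x| ≤ β^(k+1) * 2 := by nlinarith
      _ = 2 * β^(k+1) := by ring
  have h2 : Tendsto (fun k : ℕ => 2 * β^(k+1)) atTop (nhds 0) := by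
    have := (tendsto_pow_atTop_nhds_zero_of_lt_one hβ0 hβ1).const_mul (2*β)
    rw [mul_zero] at this
    refine this.congr fun k => ?_
    ring
  have h3 : Tendsto (fun k => itc g k x - u x) atTop (nhds 0) :=
    squeeze_zero_norm hbound h2
  have h4 := h3.add_const (u x)
  rw [zero_add] at h4
  refine h4.congr fun k => ?_
  ring

variable {m : ℕ} {G : Type*} {K : Fin m → Type*} [Group G] [Fintype G]
  [∀ j, Group (K j)] [∀ j, Fintype (K j)]


variable {m : ℕ} {G : Type*} {K : Fin m → Type*} [Group G] [Fintype G]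
  [∀ j, Group (K j)] [∀ j, Fintype (K j)]

/-- numerator of the BL functional -/
noncomputable def NF (φ : ∀ j, G →* K j) (s : Fin m → ℝ) (f : ∀ j, K j → ℝ) : ℝ :=
  ∑ x, ∏ j, f j (φ j x) ^ s j

/-- denominator of the BL functional -/
noncomputable def DF {K : Fin m → Type*} [∀ j, Fintype (K j)] (s : Fin m → ℝ)
    (f : ∀ j, K j → ℝ) : ℝ :=
  ∏ j, (∑ y, f j y) ^ s j

theorem BLfun_eq (φ : ∀ j, G →* K j) (s : Fin m → ℝ) (f : ∀ j, K j → ℝ) :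
    BLfun φ s f = NF φ s f / DF s f := rfl

def BLset (φ : ∀ j, G →* K j) (s : Fin m → ℝ) : Set ℝ :=
  {c : ℝ | ∃ f : ∀ j, K j → ℝ,
    (∀ j x, 0 ≤ f j x) ∧ (∀ j, f j ≠ 0) ∧ c = BLfun φ s f}

theorem BLconst_eq (φ : ∀ j, G →* K j) (s : Fin m → ℝ) :
    BLconst φ s = sSup (BLset φ s) := rfl

theorem NF_nonneg (φ : ∀ j, G →* K j) (s : Fin m → ℝ) {f : ∀ j, K j → ℝ}
    (hf : ∀ j x, 0 ≤ f j x) : 0 ≤ NF φ s f :=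
  Finset.sum_nonneg fun x _ => Finset.prod_nonneg fun j _ => Real.rpow_nonneg (hf j _) _

theorem DF_nonneg (s : Fin m → ℝ) {f : ∀ j, K j → ℝ} (hf : ∀ j x, 0 ≤ f j x) :
    0 ≤ DF s f :=
  Finset.prod_nonneg fun j _ => Real.rpow_nonneg (Finset.sum_nonneg fun y _ => hf j y) _

theorem sum_pos_of_ne_zero {α : Type*} [Fintype α] {f : α → ℝ} (hf : ∀ x, 0 ≤ f x)
    (hne : f ≠ 0) : 0 < ∑ x, f x := by
  obtain ⟨x, hx⟩ := Function.ne_iff.mp hne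
  exact Finset.sum_pos' (fun y _ => hf y)
    ⟨x, Finset.mem_univ x, lt_of_le_of_ne (hf x) (Ne.symm hx)⟩

theorem DF_pos (s : Fin m → ℝ) {f : ∀ j, K j → ℝ} (hf : ∀ j x, 0 ≤ f j x)
    (hne : ∀ j, f j ≠ 0) : 0 < DF s f :=
  Finset.prod_pos fun j _ =>
    Real.rpow_pos_of_pos (sum_pos_of_ne_zero (hf j) (hne j)) _

theorem mem_BLset (φ : ∀ j, G →* K j) (s : Fin m → ℝ) {f : ∀ j, K j → ℝ}
    (hf : ∀ j x, 0 ≤ f j x) (hne : ∀ j, f j ≠ 0) : BLfun φ s f ∈ BLset φ s :=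
  ⟨f, hf, hne, rfl⟩

theorem NF_le (φ : ∀ j, G →* K j) {s : Fin m → ℝ} (hs : ∀ j, 0 ≤ s j)
    {f : ∀ j, K j → ℝ} (hf : ∀ j x, 0 ≤ f j x) :
    NF φ s f ≤ (Fintype.card G : ℝ) * DF s f := by
  have h1 : ∀ x : G, ∏ j, f j (φ j x) ^ s j ≤ DF s f := by
    intro x
    refine Finset.prod_le_prod (fun j _ => Real.rpow_nonneg (hf j _) _) fun j _ => ?_
    exact Real.rpow_le_rpow (hf j _)
      (Finset.single_le_sum (fun y _ => hf j y) (Finset.mem_univ _)) (hs j)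
  calc NF φ s f ≤ ∑ _x : G, DF s f := Finset.sum_le_sum fun x _ => h1 x
  _ = (Fintype.card G : ℝ) * DF s f := by
      rw [Finset.sum_const, Finset.card_univ, nsmul_eq_mul]

theorem BLset_bddAbove (φ : ∀ j, G →* K j) {s : Fin m → ℝ} (hs : ∀ j, 0 ≤ s j) :
    ∀ c ∈ BLset φ s, c ≤ (Fintype.card G : ℝ) := by
  rintro c ⟨f, hf, hne, rfl⟩
  rw [BLfun_eq, div_le_iff₀ (DF_pos s hf hne)]
  exact NF_le φ hs hf

theorem BLset_nonempty (φ : ∀ j, G →* K j) (s : Fin m → ℝ) :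
    (BLset φ s).Nonempty := by
  refine ⟨_, mem_BLset φ s (f := fun _ _ => (1:ℝ)) (fun j x => zero_le_one) fun j => ?_⟩
  intro h
  have := congrFun h 1
  simp at this

theorem le_BLconst (φ : ∀ j, G →* K j) {s : Fin m → ℝ} (hs : ∀ j, 0 ≤ s j)
    {f : ∀ j, K j → ℝ} (hf : ∀ j x, 0 ≤ f j x) (hne : ∀ j, f j ≠ 0) :
    BLfun φ s f ≤ BLconst φ s :=
  le_csSup ⟨_, BLset_bddAbove φ hs⟩ (mem_BLset φ s hf hne)

theorem BLconst_pos (φ : ∀ j, G →* K j) {s : Fin m → ℝ} (hs : ∀ j, 0 ≤ s j) :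
    0 < BLconst φ s := by
  have h1 : (0:ℝ) < BLfun φ s (fun _ _ => (1:ℝ)) := by
    rw [BLfun_eq]
    refine div_pos ?_ (DF_pos s (fun j x => zero_le_one) ?_)
    · refine Finset.sum_pos (fun x _ => Finset.prod_pos fun j _ => ?_) ⟨1, Finset.mem_univ 1⟩
      simpa using Real.rpow_pos_of_pos one_pos (s j)
    · intro j h
      have := congrFun h 1
      simp at this
  calc (0:ℝ) < _ := h1
  _ ≤ BLconst φ s := le_BLconst φ hs (fun j x => zero_le_one) fun j h => by
      have := congrFun h 1; simp at this

open Classical in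
/-- The fundamental inequality: valid for all nonneg inputs, even zero ones. -/
theorem NF_le_BLconst_mul_DF (φ : ∀ j, G →* K j) {s : Fin m → ℝ} (hs : ∀ j, 0 ≤ s j)
    {f : ∀ j, K j → ℝ} (hf : ∀ j x, 0 ≤ f j x) :
    NF φ s f ≤ BLconst φ s * DF s f := by
  by_cases hA : ∃ j, f j = 0 ∧ s j ≠ 0
  · obtain ⟨j0, hj0, hs0⟩ := hA
    have hN : NF φ s f = 0 := Finset.sum_eq_zero fun x _ =>
      Finset.prod_eq_zero (Finset.mem_univ j0) (by
        rw [hj0]; simp [Real.zero_rpow hs0])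
    rw [hN]
    exact mul_nonneg (BLconst_pos φ hs).le (DF_nonneg s hf)
  · push_neg at hA
    set f' : ∀ j, K j → ℝ := fun j => if f j = 0 then (fun _ => (1:ℝ)) else f j with hf'
    have hNeq : NF φ s f = NF φ s f' := by
      refine Finset.sum_congr rfl fun x _ => Finset.prod_congr rfl fun j _ => ?_
      by_cases h : f j = 0
      · rw [hA j h]
        simp
      · simp [hf', h]
    have hDeq : DF s f = DF s f' := by
      refine Finset.prod_congr rfl fun j _ => ?_
      by_cases h : f j = 0
      · rw [hA j h]
        simp
      · simp [hf', h]
    have hf'n : ∀ j x, 0 ≤ f' j x := by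
      intro j x
      by_cases h : f j = 0 <;> simp [hf', h, hf j x]
    have hf'ne : ∀ j, f' j ≠ 0 := by
      intro j
      by_cases h : f j = 0 <;> simp only [hf', h, if_true, if_false]
      · intro hc
        have := congrFun hc 1
        simp at this
      · exact h
    have := le_BLconst φ hs hf'n hf'ne
    rw [BLfun_eq, div_le_iff₀ (DF_pos s hf'n hf'ne)] at this
    rw [hNeq, hDeq]
    exact this







theorem DF_eq_one {s : Fin m → ℝ} {f : ∀ j, K j → ℝ} (h1 : ∀ j, ∑ x, f j x = 1) :
    DF s f = 1 := by
  unfold DF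
  simp [h1]

/-- Ball's inequality. -/
theorem ball (φ : ∀ j, G →* K j) {s : Fin m → ℝ} (hs : ∀ j, 0 ≤ s j)
    {f g : ∀ j, K j → ℝ} (hf : ∀ j x, 0 ≤ f j x) (hg : ∀ j x, 0 ≤ g j x) :
    NF φ s f * NF φ s g ≤ BLconst φ s * NF φ s (fun j => conv (f j) (g j)) := by
  have key : ∀ x : G,
      ∑ y, ∏ j, (f j (φ j y) * g j (φ j x * (φ j y)⁻¹)) ^ s j
        ≤ BLconst φ s * ∏ j, conv (f j) (g j) (φ j x) ^ s j := fun x =>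
    NF_le_BLconst_mul_DF φ hs (f := fun j z => f j z * g j (φ j x * z⁻¹))
      (fun j z => mul_nonneg (hf j z) (hg j _))
  have expand : ∀ y : G, ∑ x : G, ∏ j, g j (φ j x) ^ s j
      = ∑ x : G, ∏ j, g j (φ j (x * y⁻¹)) ^ s j := fun y =>
    (Equiv.sum_comp (Equiv.mulRight y⁻¹) (fun x => ∏ j, g j (φ j x) ^ s j)).symm
  have lhs_eq : NF φ s f * NF φ s g
      = ∑ y, ∑ x, ∏ j, (f j (φ j y) * g j (φ j x * (φ j y)⁻¹)) ^ s j := by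
    unfold NF
    rw [Finset.sum_mul]
    refine Finset.sum_congr rfl fun y _ => ?_
    rw [expand y, Finset.mul_sum]
    refine Finset.sum_congr rfl fun x _ => ?_
    rw [← Finset.prod_mul_distrib]
    refine Finset.prod_congr rfl fun j _ => ?_
    rw [← Real.mul_rpow (hf j _) (hg j _), map_mul, map_inv]
  calc NF φ s f * NF φ s g
      = ∑ y, ∑ x, ∏ j, (f j (φ j y) * g j (φ j x * (φ j y)⁻¹)) ^ s j := lhs_eq
    _ = ∑ x, ∑ y, ∏ j, (f j (φ j y) * g j (φ j x * (φ j y)⁻¹)) ^ s j := Finset.sum_comm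
    _ ≤ ∑ x, BLconst φ s * ∏ j, conv (f j) (g j) (φ j x) ^ s j :=
        Finset.sum_le_sum fun x _ => key x
    _ = BLconst φ s * NF φ s (fun j => conv (f j) (g j)) := by
        rw [← Finset.mul_sum]; rfl

/-- Extremizers (normalized) are closed under componentwise convolution. -/
theorem extremizer_conv (φ : ∀ j, G →* K j) {s : Fin m → ℝ} (hs : ∀ j, 0 ≤ s j)
    {f g : ∀ j, K j → ℝ} (hf : ∀ j x, 0 ≤ f j x) (hg : ∀ j x, 0 ≤ g j x)
    (hf1 : ∀ j, ∑ x, f j x = 1) (hg1 : ∀ j, ∑ x, g j x = 1)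
    (hfN : NF φ s f = BLconst φ s) (hgN : NF φ s g = BLconst φ s) :
    NF φ s (fun j => conv (f j) (g j)) = BLconst φ s := by
  have hpos := BLconst_pos φ hs
  have h1 : BLconst φ s ≤ NF φ s (fun j => conv (f j) (g j)) := by
    have := ball φ hs hf hg
    rw [hfN, hgN] at this
    nlinarith
  have h2 : NF φ s (fun j => conv (f j) (g j)) ≤ BLconst φ s := by
    have := NF_le_BLconst_mul_DF φ hs
      (f := fun j => conv (f j) (g j)) (fun j x => ?_)
    · rwa [DF_eq_one, mul_one] at this
      intro j
      rw [sum_conv, hf1 j, hg1 j, mul_one]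
      
    · exact Finset.sum_nonneg fun y _ => mul_nonneg (hf j y) (hg j _)
  linarith

/-- Existence of a normalized extremizer. -/
theorem exists_extremizer (φ : ∀ j, G →* K j) {s : Fin m → ℝ} (hs : ∀ j, 0 ≤ s j) :
    ∃ f : ∀ j, K j → ℝ, (∀ j x, 0 ≤ f j x) ∧ (∀ j, ∑ x, f j x = 1) ∧
      NF φ s f = BLconst φ s := by
  have hScomp : IsCompact (Set.univ.pi fun j => stdSimplex ℝ (K j)) :=
    isCompact_univ_pi fun j => isCompact_stdSimplex _ _
  have hSne : (Set.univ.pi fun j => stdSimplex ℝ (K j)).Nonempty := by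
    refine ⟨fun j _ => (Fintype.card (K j) : ℝ)⁻¹, fun j _ => ⟨fun x => by positivity, ?_⟩⟩
    rw [Finset.sum_const, Finset.card_univ, nsmul_eq_mul]
    rw [mul_inv_cancel₀]
    exact_mod_cast Fintype.card_ne_zero
  have hcont : Continuous (NF φ s) := by
    unfold NF
    refine continuous_finset_sum _ fun x _ => continuous_finset_prod _ fun j _ => ?_
    exact Continuous.rpow_const ((continuous_apply (φ j x)).comp (continuous_apply j))
      fun f => Or.inr (hs j)
  obtain ⟨f₀, hf₀S, hmax⟩ := hScomp.exists_isMaxOn hSne hcont.continuousOn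
  have hf₀ : ∀ j x, 0 ≤ f₀ j x := fun j x => (hf₀S j (Set.mem_univ j)).1 x
  have hf₀1 : ∀ j, ∑ x, f₀ j x = 1 := fun j => (hf₀S j (Set.mem_univ j)).2
  refine ⟨f₀, hf₀, hf₀1, ?_⟩
  have hne : ∀ j, f₀ j ≠ 0 := by
    intro j hc
    have := hf₀1 j
    rw [hc] at this
    simp at this
  -- NF f₀ ≤ BLconst
  have hle : NF φ s f₀ ≤ BLconst φ s := by
    have := le_BLconst φ hs hf₀ hne
    rwa [BLfun, show (∏ j, (∑ y, f₀ j y) ^ s j) = 1 from DF_eq_one hf₀1, div_one] at this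
  -- BLconst ≤ NF f₀ : every member of the set is ≤ NF f₀ via normalization
  have hge : BLconst φ s ≤ NF φ s f₀ := by
    refine csSup_le (BLset_nonempty φ s) ?_
    rintro c ⟨g, hgn, hgne, rfl⟩
    -- normalize g
    set g' : ∀ j, K j → ℝ := fun j y => (∑ z, g j z)⁻¹ * g j y with hg'
    have hsum : ∀ j, 0 < ∑ z, g j z := fun j => sum_pos_of_ne_zero (hgn j) (hgne j)
    have hg'S : g' ∈ Set.univ.pi fun j => stdSimplex ℝ (K j) := by
      refine fun j _ => ⟨fun y => mul_nonneg (inv_nonneg.2 (hsum j).le) (hgn j y), ?_⟩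
      rw [← Finset.mul_sum, inv_mul_cancel₀ (hsum j).ne']
    have hNg' : NF φ s g' = NF φ s g / DF s g := by
      unfold NF DF
      rw [eq_div_iff (ne_of_gt (Finset.prod_pos fun j _ => Real.rpow_pos_of_pos (hsum j) _)), Finset.sum_mul]
      refine Finset.sum_congr rfl fun x _ => ?_
      rw [← Finset.prod_mul_distrib]
      refine Finset.prod_congr rfl fun j _ => ?_
      have hpow : (0:ℝ) < (∑ z, g j z) ^ s j := Real.rpow_pos_of_pos (hsum j) _
      rw [hg']
      rw [Real.mul_rpow (inv_nonneg.2 (hsum j).le) (hgn j _), Real.inv_rpow (hsum j).le]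
      field_simp
    have heq : BLfun φ s g = NF φ s g' := hNg'.symm
    rw [heq]
    exact hmax hg'S
  linarith












theorem BLconst_attained_at_subgroups' (φ : ∀ j, G →* K j) (s : Fin m → ℝ)
    (hs : ∀ j, s j ∈ Set.Icc (0 : ℝ) 1) :
    ∃ (Γ : ∀ j, Subgroup (K j)) (a : Fin m → ℝ), (∀ j, 0 < a j) ∧
      BLconst φ s
        = BLfun φ s (fun j => Set.indicator (Γ j : Set (K j)) (fun _ => a j)) := by
  have hs0 : ∀ j, 0 ≤ s j := fun j => (hs j).1
  obtain ⟨f, hf, hf1, hfN⟩ := exists_extremizer φ hs0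
  -- all iterates of an extremizer are extremizers
  have iterext : ∀ (g : ∀ j, K j → ℝ), (∀ j x, 0 ≤ g j x) → (∀ j, ∑ x, g j x = 1) →
      NF φ s g = BLconst φ s → ∀ n, (∀ j x, 0 ≤ itc (g j) n x) ∧
      (∀ j, ∑ x, itc (g j) n x = 1) ∧ NF φ s (fun j => itc (g j) n) = BLconst φ s := by
    intro g hg hg1 hgN n
    induction n with
    | zero => exact ⟨hg, hg1, hgN⟩
    | succ n ih =>
      obtain ⟨h0, h1, h2⟩ := ih
      exact ⟨fun j x => conv_nonneg (h0 j) (hg j) x,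
        fun j => by
          rw [show itc (g j) (n+1) = conv (itc (g j) n) (g j) from rfl, sum_conv, h1 j,
            hg1 j, mul_one],
        extremizer_conv φ hs0 h0 hg h1 hg1 h2 hgN⟩
  -- pigeonhole on supports
  obtain ⟨p', q', hpq', hT'⟩ := Finite.exists_ne_map_eq_of_infinite
      (fun n : ℕ => fun j => {x | 0 < itc (f j) n x})
  obtain ⟨p, q, hpq, hT⟩ : ∃ p q, p < q ∧
      (fun j => {x | 0 < itc (f j) p x}) = (fun j => {x | 0 < itc (f j) q x}) := by
    rcases lt_or_gt_of_ne hpq' with h | h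
    · exact ⟨p', q', h, hT'⟩
    · exact ⟨q', p', h, hT'.symm⟩
  have hTiff : ∀ j (x : K j), 0 < itc (f j) p x ↔ 0 < itc (f j) q x := by
    intro j x
    exact Set.ext_iff.mp (congrFun hT j) x
  have hstep : ∀ t j (x : K j), 0 < itc (f j) (p+t) x ↔ 0 < itc (f j) (q+t) x := by
    intro t
    induction t with
    | zero => simpa using hTiff
    | succ t ih =>
      intro j x
      exact supp_conv_congr (itc_nonneg (hf j) _) (itc_nonneg (hf j) _) (hf j) (ih j) x
  have hper : ∀ b, p ≤ b → ∀ j (x : K j),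
      (0 < itc (f j) (b + (q-p)) x ↔ 0 < itc (f j) b x) := by
    intro b hb j x
    obtain ⟨t, rfl⟩ := Nat.exists_eq_add_of_le hb
    have harith : p + t + (q - p) = q + t := by omega
    rw [harith]
    exact (hstep t j x).symm
  have hiter : ∀ r b, p ≤ b → ∀ j (x : K j),
      (0 < itc (f j) (b + r*(q-p)) x ↔ 0 < itc (f j) b x) := by
    intro r
    induction r with
    | zero => simp
    | succ r ih =>
      intro b hb j x
      have h1 : b + (r+1)*(q-p) = (b + r*(q-p)) + (q-p) := by ring
      rw [h1]
      exact (hper _ (by omega) j x).trans (ih b hb j x)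
  set d := q - p with hddef
  have hd : 0 < d := by omega
  set n₀ := d * (p+1) - 1 with hn₀
  have hD : p + 1 ≤ d * (p+1) := Nat.le_mul_of_pos_left _ hd
  have hn₀p : p ≤ n₀ := by omega
  have harith2 : n₀ + n₀ + 1 = n₀ + (p+1) * d := by
    have h1 : n₀ + 1 = d * (p+1) := by omega
    calc n₀ + n₀ + 1 = n₀ + (n₀ + 1) := by ring
      _ = n₀ + (p+1) * d := by rw [h1, mul_comm]
  set g := fun j => itc (f j) n₀ with hgdef
  obtain ⟨hg0, hg1, hgN⟩ := iterext f hf hf1 hfN n₀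
  have hTT : ∀ j (x : K j), 0 < conv (g j) (g j) x ↔ 0 < g j x := by
    intro j x
    have h1 := hiter (p+1) n₀ hn₀p j x
    rw [← harith2, itc_add] at h1
    exact h1
  have hsub : ∀ j, ∃ Γ : Subgroup (K j), (Γ : Set (K j)) = {x | 0 < g j x} := by
    intro j
    refine exists_subgroup_of_mul_closed _ ?_ ?_
    · by_contra hc
      rw [Set.not_nonempty_iff_eq_empty] at hc
      have hz : ∑ x, g j x = 0 := Finset.sum_eq_zero fun x _ => by
        have : x ∉ ({x | 0 < g j x} : Set (K j)) := by rw [hc]; exact Set.notMem_empty x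
        exact le_antisymm (not_lt.mp this) (hg0 j x)
      rw [hg1 j] at hz
      norm_num at hz
    · intro x hx y hy
      refine (hTT j (x*y)).1 ?_
      refine Finset.sum_pos' (fun z _ => mul_nonneg (hg0 j _) (hg0 j _))
        ⟨y, Finset.mem_univ y, ?_⟩
      have h1 : x * y * y⁻¹ = x := by group
      rw [h1]
      exact mul_pos hy hx
  choose Γ hΓ using hsub
  have hmem : ∀ j (x : K j), x ∈ Γ j ↔ 0 < g j x := by
    intro j x
    exact Set.ext_iff.mp (hΓ j) x
  have hmix := fun j => mixing (Γ j) (hg0 j) (hg1 j) (hmem j)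
  choose a ha hsuma htends using hmix
  refine ⟨Γ, a, ha, ?_⟩
  set u := fun j => Set.indicator (Γ j : Set (K j)) (fun _ => a j) with hudef
  have hext := fun k => (iterext g hg0 hg1 hgN k).2.2
  have htendN : Tendsto (fun k => NF φ s (fun j => itc (g j) k)) atTop (nhds (NF φ s u)) := by
    unfold NF
    refine tendsto_finset_sum _ fun x _ => tendsto_finset_prod _ fun j _ => ?_
    exact ((Real.continuousAt_rpow_const _ _ (Or.inr (hs0 j))).tendsto).comp (htends j (φ j x))
  have hconstN : Tendsto (fun k => NF φ s (fun j => itc (g j) k)) atTop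
      (nhds (BLconst φ s)) := by
    refine Tendsto.congr (fun k => (hext k).symm) tendsto_const_nhds
  have hNu : NF φ s u = BLconst φ s := tendsto_nhds_unique htendN hconstN
  rw [show BLfun φ s u = NF φ s u / DF s u from rfl, DF_eq_one hsuma, div_one, hNu]


end BLaux

/-- On finite groups the Brascamp–Lieb constant is attained by inputs which
are positive multiples of indicator functions of subgroups. -/
theorem BLconst_attained_at_subgroups {m : ℕ} {G : Type*} {K : Fin m → Type*}
    [Group G] [Fintype G] [∀ j, Group (K j)] [∀ j, Fintype (K j)]
    (φ : ∀ j, G →* K j) (s : Fin m → ℝ) (hs : ∀ j, s j ∈ Set.Icc (0 : ℝ) 1) :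
    ∃ (Γ : ∀ j, Subgroup (K j)) (a : Fin m → ℝ), (∀ j, 0 < a j) ∧
      BLconst φ s
        = BLfun φ s (fun j => Set.indicator (Γ j : Set (K j)) (fun _ => a j)) := by
  exact BLaux.BLconst_attained_at_subgroups' φ s hs
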